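/- Let a ∈ (−1, 1) and x ∈ ℝ, and define f(a, x) = (a + tanh(x)) / (1 + a·tanh(x)). Then |f(a, x)| < 1, |f(a, x) − a| ≤ 2|tanh(x)|, and the partial derivative ∂ₐ f(a, x) = (1 − tanh²(x)) / (1 + a·tanh(x))² satisfies ∂ₐ f(a, x) ≤ 2 / (1 − |tanh(x)|). -/

import Mathlib

theorem cavity_update_bounds (a x : ℝ) (ha : a ∈ Set.Ioo (-1 : ℝ) 1) :
    |(a + Real.tanh x) / (1 + a * Real.tanh x)| < 1 ∧
    |(a + Real.tanh x) / (1 + a * Real.tanh x) - a| ≤ 2 * |Real.tanh x| ∧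
    HasDerivAt (fun t : ℝ => (t + Real.tanh x) / (1 + t * Real.tanh x))
      ((1 - Real.tanh x ^ 2) / (1 + a * Real.tanh x) ^ 2) a ∧
    (1 - Real.tanh x ^ 2) / (1 + a * Real.tanh x) ^ 2 ≤ 2 / (1 - |Real.tanh x|) := by
  obtain ⟨ha1, ha2⟩ := ha
  set t := Real.tanh x with htdef
  have ht : |t| < 1 := by
    rw [htdef, Real.tanh_eq_sinh_div_cosh, abs_div, abs_of_pos (Real.cosh_pos x),
      div_lt_one (Real.cosh_pos x), abs_lt]
    constructor <;>
      nlinarith [Real.sinh_eq x, Real.cosh_eq x, Real.exp_pos x, Real.exp_pos (-x)]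
  have ht1 : -1 < t := (abs_lt.mp ht).1
  have ht2 : t < 1 := (abs_lt.mp ht).2
  have hat : |a * t| < 1 := by
    rw [abs_mul]
    calc |a| * |t| ≤ 1 * |t| := by
          have := abs_lt.mpr ⟨ha1, ha2⟩; nlinarith [abs_nonneg t]
      _ < 1 := by simpa using ht
  have hden : 0 < 1 + a * t := by nlinarith [abs_lt.mp hat]
  refine ⟨?_, ?_, ?_, ?_⟩
  · rw [abs_div, abs_of_pos hden, div_lt_one hden, abs_lt]
    constructor <;> nlinarith
  · have heq : (a + t) / (1 + a * t) - a = t * (1 - a ^ 2) / (1 + a * t) := by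
      field_simp; ring
    rw [heq, abs_div, abs_of_pos hden, div_le_iff₀ hden, abs_mul,
      abs_of_nonneg (by nlinarith : (0:ℝ) ≤ 1 - a ^ 2)]
    have hkey : 0 ≤ 1 + 2 * (a * t) + a ^ 2 := by
      have h1 : |a| * |t| ≤ |a| := mul_le_of_le_one_right (abs_nonneg a) ht.le
      have h2 : -(|a| * |t|) ≤ a * t := by rw [← abs_mul]; exact neg_abs_le _
      nlinarith [sq_nonneg (1 - |a|), sq_abs a]
    nlinarith [mul_nonneg (abs_nonneg t) hkey]
  · have h1 : HasDerivAt (fun s : ℝ => s + t) 1 a := (hasDerivAt_id a).add_const t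
    have h2 : HasDerivAt (fun s : ℝ => 1 + s * t) t a := by
      simpa using ((hasDerivAt_id a).mul_const t).const_add 1
    have := h1.div h2 hden.ne'
    refine this.congr_deriv ?_
    ring
  · have hd2 : 0 < 1 - |t| := by linarith
    rw [div_le_div_iff₀ (by positivity) hd2]
    have h1 : 1 - |t| ≤ 1 + a * t := by
      have h2 : |a| * |t| ≤ |t| := by
        nlinarith [abs_nonneg t, abs_le.mpr ⟨ha1.le, ha2.le⟩, abs_nonneg a]
      have h3 : -(|a| * |t|) ≤ a * t := by rw [← abs_mul]; exact neg_abs_le _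
      linarith
    have hsq : (1 - |t|) ^ 2 ≤ (1 + a * t) ^ 2 := by nlinarith
    have h4 : 1 + |t| ≤ 2 := by linarith
    nlinarith [sq_abs t, sq_nonneg (1 - |t|), mul_le_mul_of_nonneg_left hsq (by positivity : (0:ℝ) ≤ 1 + |t|)]
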